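/- arXiv:1203.3217 — 2 statements merged into one kernel-verified Lean document; each statement's English description precedes it below -/
import Mathlib

section
/- Let p_Y be a pmf on a finite set Y, and let p_{X|Y}, p_{X̂|Y} be two conditional pmfs on a finite alphabet X (with |X| ≥ 2). Then |H(X|Y) - H(X̂|Y)| ≤ d·log(|X| - 1) + h_b(d), where d is the total variation distance between the joint pmfs p_Y p_{X|Y} and p_Y p_{X̂|Y}, H(·|Y) denotes conditional entropy under the respective joint distribution, and h_b is the binary entropy function. -/
open Finset

/-- Total variation distance between two pmfs on a finite set: half the ℓ¹ distance. -/
noncomputable def TV {α : Type*} [Fintype α] (p q : α → ℝ) : ℝ :=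
  (∑ a, |p a - q a|) / 2

/-- Shannon entropy of a pmf. -/
noncomputable def ent {α : Type*} [Fintype α] (p : α → ℝ) : ℝ :=
  -∑ a, p a * Real.log (p a)

/-- Binary entropy function. -/
noncomputable def hb (t : ℝ) : ℝ := -t * Real.log t - (1 - t) * Real.log (1 - t)

/-- `p` is a probability mass function. -/
def IsPMF {α : Type*} [Fintype α] (p : α → ℝ) : Prop :=
  (∀ a, 0 ≤ p a) ∧ ∑ a, p a = 1

/-- Pushforward pmf (distribution of the random variable `X` under `μ`). -/
noncomputable def pushf {Ω α : Type*} [Fintype Ω] [DecidableEq α]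
    (μ : Ω → ℝ) (X : Ω → α) : α → ℝ :=
  fun a => ∑ ω ∈ Finset.univ.filter (fun ω => X ω = a), μ ω

/-- Entropy of a random variable `X` on a finite probability space with pmf `μ`. -/
noncomputable def Hent {Ω α : Type*} [Fintype Ω] [Fintype α] [DecidableEq α]
    (μ : Ω → ℝ) (X : Ω → α) : ℝ := ent (pushf μ X)

/-- Conditional mutual information `I(A ; C | B)` of random variables on a finite
probability space with pmf `μ`, defined via entropies:
`I(A;C|B) = H(A,B) + H(B,C) - H(A,B,C) - H(B)`. -/
noncomputable def condMI {Ω α β γ : Type*} [Fintype Ω] [Fintype α] [Fintype β] [Fintype γ]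
    [DecidableEq α] [DecidableEq β] [DecidableEq γ]
    (μ : Ω → ℝ) (A : Ω → α) (B : Ω → β) (C : Ω → γ) : ℝ :=
  Hent μ (fun ω => (A ω, B ω)) + Hent μ (fun ω => (B ω, C ω))
    - Hent μ (fun ω => (A ω, B ω, C ω)) - Hent μ B

/- ============ auxiliary lemmas ============ -/

lemma ent_eq_sum_negMulLog {α : Type*} [Fintype α] (p : α → ℝ) :
    ent p = ∑ a, Real.negMulLog (p a) := by
  rw [ent, ← Finset.sum_neg_distrib]
  exact Finset.sum_congr rfl fun a _ => by rw [Real.negMulLog]; ring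

lemma hb_eq_negMulLog (t : ℝ) :
    hb t = Real.negMulLog t + Real.negMulLog (1 - t) := by
  simp only [hb, Real.negMulLog]; ring

lemma hb_eq_binEntropy : hb = Real.binEntropy := by
  funext t
  rw [hb_eq_negMulLog, Real.binEntropy_eq_negMulLog_add_negMulLog_one_sub]

lemma negMulLog_add_le {x y : ℝ} (hx : 0 ≤ x) (hy : 0 ≤ y) :
    Real.negMulLog (x + y) ≤ Real.negMulLog x + Real.negMulLog y := by
  rcases eq_or_lt_of_le hx with hx0 | hx0
  · simp [← hx0]
  rcases eq_or_lt_of_le hy with hy0 | hy0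
  · simp [← hy0]
  have h1 : x * Real.log x ≤ x * Real.log (x + y) :=
    mul_le_mul_of_nonneg_left (Real.log_le_log hx0 (by linarith)) hx
  have h2 : y * Real.log y ≤ y * Real.log (x + y) :=
    mul_le_mul_of_nonneg_left (Real.log_le_log hy0 (by linarith)) hy
  simp only [Real.negMulLog, neg_mul]
  nlinarith

/-- Jensen: entropy over a finset is at most `log` of its cardinality. -/
lemma sum_negMulLog_le_log_card {α : Type*} [Fintype α] (A : Finset α) (r : α → ℝ)
    (h0 : ∀ a, 0 ≤ r a) (hsum : ∑ a ∈ A, r a = 1) :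
    ∑ a ∈ A, Real.negMulLog (r a) ≤ Real.log (A.card) := by
  have hA : A.Nonempty := by
    by_contra h
    rw [Finset.not_nonempty_iff_eq_empty] at h
    simp [h] at hsum
  have hn : (0 : ℝ) < A.card := by exact_mod_cast hA.card_pos
  have key := Real.concaveOn_negMulLog.le_map_sum (t := A)
    (w := fun _ => (A.card : ℝ)⁻¹) (p := r)
    (fun a _ => by positivity)
    (by rw [Finset.sum_const, nsmul_eq_mul]; field_simp)
    (fun a _ => Set.mem_Ici.2 (h0 a))
  simp only [smul_eq_mul, ← Finset.mul_sum, hsum, mul_one] at key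
  have hval : Real.negMulLog ((A.card : ℝ)⁻¹) = (A.card : ℝ)⁻¹ * Real.log (A.card) := by
    rw [Real.negMulLog, Real.log_inv]; ring
  rw [hval] at key
  have := mul_le_mul_of_nonneg_left key (le_of_lt hn)
  calc ∑ a ∈ A, Real.negMulLog (r a)
      = (A.card : ℝ) * ((A.card : ℝ)⁻¹ * ∑ a ∈ A, Real.negMulLog (r a)) := by
        field_simp
    _ ≤ (A.card : ℝ) * ((A.card : ℝ)⁻¹ * Real.log (A.card)) := this
    _ = Real.log (A.card) := by field_simp

/-- If `0 ≤ m ≤ q` pointwise and `∑ q = 1`, then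
`∑ φ(m a) ≤ ∑ φ(q a) + φ(∑ m a)` for `φ = negMulLog`. -/
lemma sum_negMulLog_min_le {α : Type*} [Fintype α] (m q : α → ℝ)
    (hm0 : ∀ a, 0 ≤ m a) (hmq : ∀ a, m a ≤ q a) (hq1 : ∑ a, q a = 1) :
    ∑ a, Real.negMulLog (m a) ≤ ∑ a, Real.negMulLog (q a) + Real.negMulLog (∑ a, m a) := by
  set c := ∑ a, m a with hc
  have hq0 : ∀ a, 0 ≤ q a := fun a => (hm0 a).trans (hmq a)
  have hqle : ∀ a, q a ≤ 1 := by
    intro a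
    rw [← hq1]
    exact Finset.single_le_sum (fun i _ => hq0 i) (Finset.mem_univ a)
  have hc0 : 0 ≤ c := Finset.sum_nonneg fun a _ => hm0 a
  have hc1 : c ≤ 1 := by rw [← hq1]; exact Finset.sum_le_sum fun a _ => hmq a
  rcases eq_or_lt_of_le hc0 with hc0' | hc0'
  · -- c = 0, so m = 0
    have hm : ∀ a ∈ Finset.univ, m a = 0 :=
      (Finset.sum_eq_zero_iff_of_nonneg (fun a _ => hm0 a)).1 hc0'.symm
    have : ∑ a, Real.negMulLog (m a) = 0 :=
      Finset.sum_eq_zero fun a ha => by rw [hm a ha, Real.negMulLog_zero]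
    rw [this, ← hc0', Real.negMulLog_zero, add_zero]
    exact Finset.sum_nonneg fun a _ => Real.negMulLog_nonneg (hq0 a) (hqle a)
  rcases eq_or_lt_of_le hc1 with hc1' | hc1'
  · -- c = 1, so m = q
    have hm : ∀ a ∈ Finset.univ, m a = q a := by
      refine (Finset.sum_eq_sum_iff_of_le fun a _ => hmq a).1 ?_
      rw [hq1, ← hc, hc1']
    have h1 : ∑ a, Real.negMulLog (m a) = ∑ a, Real.negMulLog (q a) :=
      Finset.sum_congr rfl fun a ha => by rw [hm a ha]
    rw [h1, hc1', Real.negMulLog_one, add_zero]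
  · -- 0 < c < 1
    have h1c : 0 < 1 - c := by linarith
    have hsub : ∑ a, (q a - m a) = 1 - c := by
      rw [Finset.sum_sub_distrib, hq1, ← hc]
    have key : ∀ a, c * Real.negMulLog (m a / c) ≤ Real.negMulLog (q a) := by
      intro a
      have hmem1 : m a / c ∈ Set.Ici (0:ℝ) :=
        Set.mem_Ici.2 (div_nonneg (hm0 a) hc0)
      have hs0 : 0 ≤ (q a - m a) / (1 - c) :=
        div_nonneg (by linarith [hmq a]) (le_of_lt h1c)
      have hmem2 : (q a - m a) / (1 - c) ∈ Set.Ici (0:ℝ) := Set.mem_Ici.2 hs0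
      have hconc := Real.concaveOn_negMulLog.2 hmem1 hmem2 (le_of_lt hc0')
        (le_of_lt h1c) (by ring)
      have harg : c • (m a / c) + (1 - c) • ((q a - m a) / (1 - c)) = q a := by
        rw [smul_eq_mul, smul_eq_mul]
        field_simp
        ring
      rw [harg] at hconc
      have hs1 : (q a - m a) / (1 - c) ≤ 1 := by
        rw [div_le_one h1c, ← hsub]
        exact Finset.single_le_sum (f := fun i => q i - m i)
          (fun i _ => by simpa using sub_nonneg.2 (hmq i)) (Finset.mem_univ a)
      have hφs : 0 ≤ Real.negMulLog ((q a - m a) / (1 - c)) :=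
        Real.negMulLog_nonneg hs0 hs1
      simp only [smul_eq_mul] at hconc
      nlinarith
    have hdecomp : ∀ a, Real.negMulLog (m a) =
        (m a / c) * Real.negMulLog c + c * Real.negMulLog (m a / c) := by
      intro a
      have : m a = c * (m a / c) := by field_simp
      conv_lhs => rw [this]
      rw [Real.negMulLog_mul]
    calc ∑ a, Real.negMulLog (m a)
        = ∑ a, ((m a / c) * Real.negMulLog c + c * Real.negMulLog (m a / c)) :=
          Finset.sum_congr rfl fun a _ => hdecomp a
      _ = (∑ a, m a / c) * Real.negMulLog c + ∑ a, c * Real.negMulLog (m a / c) := by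
          rw [Finset.sum_add_distrib, Finset.sum_mul]
      _ = Real.negMulLog c + ∑ a, c * Real.negMulLog (m a / c) := by
          rw [← Finset.sum_div, ← hc, div_self (ne_of_gt hc0'), one_mul]
      _ ≤ Real.negMulLog c + ∑ a, Real.negMulLog (q a) := by
          have := Finset.sum_le_sum (fun a (_ : a ∈ Finset.univ) => key a)
          linarith
      _ = ∑ a, Real.negMulLog (q a) + Real.negMulLog c := by ring

lemma TV_nonneg {α : Type*} [Fintype α] (p q : α → ℝ) : 0 ≤ TV p q := by
  rw [TV]
  positivity

lemma TV_comm {α : Type*} [Fintype α] (p q : α → ℝ) : TV q p = TV p q := by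
  simp [TV, abs_sub_comm]

/-- The one-sided entropy continuity bound for a single pair of pmfs. -/
lemma ent_sub_ent_le {α : Type*} [Fintype α] (p q : α → ℝ)
    (hp : IsPMF p) (hq : IsPMF q) (hcard : 2 ≤ Fintype.card α) :
    ent p - ent q ≤ TV p q * Real.log ((Fintype.card α : ℝ) - 1) + hb (TV p q) := by
  classical
  set d := TV p q with hd
  set L := Real.log ((Fintype.card α : ℝ) - 1) with hL
  set m : α → ℝ := fun a => min (p a) (q a) with hm
  have hm0 : ∀ a, 0 ≤ m a := fun a => le_min (hp.1 a) (hq.1 a)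
  have habs : ∀ a, |p a - q a| = p a + q a - 2 * m a := by
    intro a
    rcases le_total (p a) (q a) with h | h
    · rw [abs_of_nonpos (by linarith)]
      simp only [hm, min_eq_left h]; ring
    · rw [abs_of_nonneg (by linarith)]
      simp only [hm, min_eq_right h]; ring
  have h2d : ∑ a, |p a - q a| = 2 * d := by rw [hd, TV]; ring
  have hsum_m : ∑ a, m a = 1 - d := by
    have h : ∑ a, m a = (∑ a, p a + ∑ a, q a - ∑ a, |p a - q a|) / 2 := by
      rw [← Finset.sum_add_distrib, ← Finset.sum_sub_distrib, Finset.sum_div]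
      exact Finset.sum_congr rfl fun a _ => by rw [habs a]; ring
    rw [h, hp.2, hq.2, h2d]; ring
  have hd0 : 0 ≤ d := TV_nonneg p q
  have hd1 : d ≤ 1 := by
    have := Finset.sum_nonneg (fun a (_ : a ∈ Finset.univ) => hm0 a)
    linarith [hsum_m ▸ this]
  have hLpos : 0 ≤ L := by
    apply Real.log_nonneg
    have : (2 : ℝ) ≤ (Fintype.card α : ℝ) := by exact_mod_cast hcard
    linarith
  -- g := p - m, nonneg, sums to d, supported where q < p
  set g : α → ℝ := fun a => p a - m a with hg
  have hg0 : ∀ a, 0 ≤ g a := fun a => sub_nonneg.2 (min_le_left _ _)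
  have hgsum : ∑ a, g a = d := by
    rw [hg]
    simp only
    rw [Finset.sum_sub_distrib, hp.2, hsum_m]; ring
  -- upper bound on ∑ φ (g a)
  have hup : ∑ a, Real.negMulLog (g a) ≤ d * L + Real.negMulLog d := by
    rcases eq_or_lt_of_le hd0 with hd0' | hd0'
    · have hgz : ∀ a ∈ Finset.univ, g a = 0 :=
        (Finset.sum_eq_zero_iff_of_nonneg (fun a _ => hg0 a)).1 (by rw [hgsum, ← hd0'])
      have : ∑ a, Real.negMulLog (g a) = 0 :=
        Finset.sum_eq_zero fun a ha => by rw [hgz a ha, Real.negMulLog_zero]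
      rw [this, ← hd0', Real.negMulLog_zero]; norm_num [hLpos]
    · set A : Finset α := Finset.univ.filter (fun a => q a < p a) with hA
      have hgA : ∀ a ∉ A, g a = 0 := by
        intro a ha
        have : ¬ q a < p a := by simpa [hA] using ha
        have hle : p a ≤ q a := le_of_not_gt this
        simp only [hg, hm, min_eq_left hle, sub_self]
      -- some point outside A
      have hex : ∃ a₀, p a₀ ≤ q a₀ := by
        by_contra h
        push_neg at h
        have huniv : (Finset.univ : Finset α).Nonempty := by
          rw [← Finset.card_pos, Finset.card_univ]; omega
        have := Finset.sum_lt_sum_of_nonempty huniv (fun a _ => h a)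
        rw [hp.2, hq.2] at this
        exact lt_irrefl 1 this
      obtain ⟨a₀, ha₀⟩ := hex
      have ha₀A : a₀ ∉ A := by simp [hA, not_lt.2 ha₀]
      have hAcard : (A.card : ℝ) ≤ (Fintype.card α : ℝ) - 1 := by
        have h1 : A ⊆ Finset.univ.erase a₀ :=
          fun a ha => Finset.mem_erase.2 ⟨fun h => ha₀A (h ▸ ha), Finset.mem_univ a⟩
        have h2 : A.card ≤ Fintype.card α - 1 := by
          have := Finset.card_le_card h1
          rwa [Finset.card_erase_of_mem (Finset.mem_univ a₀), Finset.card_univ] at this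
        have h3 : (A.card : ℝ) ≤ ((Fintype.card α - 1 : ℕ) : ℝ) := by exact_mod_cast h2
        rwa [Nat.cast_sub (by omega), Nat.cast_one] at h3
      have hAne : A.Nonempty := by
        by_contra h
        rw [Finset.not_nonempty_iff_eq_empty] at h
        have : ∑ a, g a = 0 :=
          Finset.sum_eq_zero fun a _ => hgA a (by simp [h])
        rw [hgsum] at this; linarith
      set r : α → ℝ := fun a => g a / d with hr
      have hr0 : ∀ a, 0 ≤ r a := fun a => by
        have := hg0 a; positivity
      have hruniv : ∑ a, r a = 1 := by
        rw [hr]; simp only; rw [← Finset.sum_div, hgsum, div_self (ne_of_gt hd0')]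
      have hrA : ∑ a ∈ A, r a = 1 := by
        rw [← hruniv]
        exact Finset.sum_subset A.subset_univ
          (fun a _ ha => by simp [hr, hgA a ha])
      have hjensen : ∑ a ∈ A, Real.negMulLog (r a) ≤ Real.log (A.card) :=
        sum_negMulLog_le_log_card A r hr0 hrA
      have hlogA : Real.log (A.card) ≤ L := by
        apply Real.log_le_log (by exact_mod_cast hAne.card_pos) hAcard
      have hsum_r : ∑ a, Real.negMulLog (r a) = ∑ a ∈ A, Real.negMulLog (r a) :=
        (Finset.sum_subset A.subset_univ
          (fun a _ ha => by simp [hr, hgA a ha])).symm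
      have hexp : ∑ a, Real.negMulLog (g a)
          = Real.negMulLog d + d * ∑ a, Real.negMulLog (r a) := by
        have : ∀ a, Real.negMulLog (g a)
            = r a * Real.negMulLog d + d * Real.negMulLog (r a) := by
          intro a
          have hga : g a = d * r a := by rw [hr]; field_simp
          rw [hga, Real.negMulLog_mul]
        rw [Finset.sum_congr rfl fun a _ => this a, Finset.sum_add_distrib,
          ← Finset.sum_mul, hruniv, one_mul, ← Finset.mul_sum]
      rw [hexp, hsum_r]
      have : d * ∑ a ∈ A, Real.negMulLog (r a) ≤ d * L :=
        mul_le_mul_of_nonneg_left (hjensen.trans hlogA) hd0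
      linarith
  -- upper bound on ent p
  have hentp : ent p ≤ ∑ a, Real.negMulLog (m a) + ∑ a, Real.negMulLog (g a) := by
    rw [ent_eq_sum_negMulLog, ← Finset.sum_add_distrib]
    refine Finset.sum_le_sum fun a _ => ?_
    have h := negMulLog_add_le (hm0 a) (hg0 a)
    have harg : m a + g a = p a := by simp [hg]
    rwa [harg] at h
  -- lower bound on ent q
  have hentq : ∑ a, Real.negMulLog (m a) ≤ ent q + Real.negMulLog (1 - d) := by
    rw [ent_eq_sum_negMulLog]
    have := sum_negMulLog_min_le m q hm0 (fun a => min_le_right _ _) hq.2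
    rwa [hsum_m] at this
  have hhb : hb d = Real.negMulLog d + Real.negMulLog (1 - d) := hb_eq_negMulLog d
  linarith

/-- Two-sided bound. -/
lemma abs_ent_sub_ent_le {α : Type*} [Fintype α] (p q : α → ℝ)
    (hp : IsPMF p) (hq : IsPMF q) (hcard : 2 ≤ Fintype.card α) :
    |ent p - ent q| ≤ TV p q * Real.log ((Fintype.card α : ℝ) - 1) + hb (TV p q) := by
  rw [abs_sub_le_iff]
  refine ⟨ent_sub_ent_le p q hp hq hcard, ?_⟩
  have := ent_sub_ent_le q p hq hp hcard
  rwa [TV_comm] at this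

lemma TV_le_one {α : Type*} [Fintype α] (p q : α → ℝ) (hp : IsPMF p) (hq : IsPMF q) :
    TV p q ≤ 1 := by
  rw [TV, div_le_one (by norm_num)]
  calc ∑ a, |p a - q a| ≤ ∑ a, (p a + q a) := by
        refine Finset.sum_le_sum fun a _ => ?_
        exact abs_le.2 ⟨by linarith [hp.1 a, hq.1 a], by linarith [hp.1 a, hq.1 a]⟩
    _ = 2 := by rw [Finset.sum_add_distrib, hp.2, hq.2]; norm_num

theorem cond_entropy_tv_bound {X Y : Type*} [Fintype X] [Fintype Y]
    (pY : Y → ℝ) (W V : Y → X → ℝ)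
    (hpY : IsPMF pY) (hW : ∀ y, IsPMF (W y)) (hV : ∀ y, IsPMF (V y))
    (hcard : 2 ≤ Fintype.card X) :
    |(∑ y, pY y * ent (W y)) - ∑ y, pY y * ent (V y)| ≤
      TV (fun yx : Y × X => pY yx.1 * W yx.1 yx.2)
          (fun yx : Y × X => pY yx.1 * V yx.1 yx.2)
        * Real.log ((Fintype.card X : ℝ) - 1)
      + hb (TV (fun yx : Y × X => pY yx.1 * W yx.1 yx.2)
              (fun yx : Y × X => pY yx.1 * V yx.1 yx.2)) := by
  set L := Real.log ((Fintype.card X : ℝ) - 1) with hL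
  set d : Y → ℝ := fun y => TV (W y) (V y) with hdy
  have hd0 : ∀ y, 0 ≤ d y := fun y => TV_nonneg _ _
  have hd1 : ∀ y, d y ≤ 1 := fun y => TV_le_one _ _ (hW y) (hV y)
  have hLpos : 0 ≤ L := by
    apply Real.log_nonneg
    have : (2 : ℝ) ≤ (Fintype.card X : ℝ) := by exact_mod_cast hcard
    linarith
  -- joint TV decomposition
  have hD : TV (fun yx : Y × X => pY yx.1 * W yx.1 yx.2)
      (fun yx : Y × X => pY yx.1 * V yx.1 yx.2) = ∑ y, pY y * d y := by
    rw [TV]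
    have h1 : ∑ yx : Y × X, |pY yx.1 * W yx.1 yx.2 - pY yx.1 * V yx.1 yx.2|
        = ∑ y, pY y * ∑ x, |W y x - V y x| := by
      rw [Fintype.sum_prod_type]
      refine Finset.sum_congr rfl fun y _ => ?_
      rw [Finset.mul_sum]
      refine Finset.sum_congr rfl fun x _ => ?_
      rw [← mul_sub, abs_mul, abs_of_nonneg (hpY.1 y)]
    rw [h1, Finset.sum_div]
    refine Finset.sum_congr rfl fun y _ => ?_
    rw [hdy]
    simp only [TV]
    ring
  have hconc : ConcaveOn ℝ (Set.Icc (0:ℝ) 1) hb := by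
    rw [hb_eq_binEntropy]
    exact Real.strictConcave_binEntropy.concaveOn
  have hjensen : ∑ y, pY y * hb (d y) ≤ hb (∑ y, pY y * d y) := by
    have := hconc.le_map_sum (t := Finset.univ) (w := pY) (p := d)
      (fun y _ => hpY.1 y) hpY.2 (fun y _ => Set.mem_Icc.2 ⟨hd0 y, hd1 y⟩)
    simpa using this
  have step1 : |(∑ y, pY y * ent (W y)) - ∑ y, pY y * ent (V y)|
      ≤ ∑ y, pY y * (d y * L + hb (d y)) := by
    rw [← Finset.sum_sub_distrib]
    refine (Finset.abs_sum_le_sum_abs _ _).trans (Finset.sum_le_sum fun y _ => ?_)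
    rw [← mul_sub, abs_mul, abs_of_nonneg (hpY.1 y)]
    exact mul_le_mul_of_nonneg_left
      (abs_ent_sub_ent_le (W y) (V y) (hW y) (hV y) hcard) (hpY.1 y)
  have step2 : ∑ y, pY y * (d y * L + hb (d y))
      = (∑ y, pY y * d y) * L + ∑ y, pY y * hb (d y) := by
    simp_rw [mul_add, ← mul_assoc]
    rw [Finset.sum_add_distrib, ← Finset.sum_mul]
  rw [hD]
  calc |(∑ y, pY y * ent (W y)) - ∑ y, pY y * ent (V y)|
      ≤ ∑ y, pY y * (d y * L + hb (d y)) := step1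
    _ = (∑ y, pY y * d y) * L + ∑ y, pY y * hb (d y) := step2
    _ ≤ (∑ y, pY y * d y) * L + hb (∑ y, pY y * d y) := by linarith
end

section
/- Let random variables ω, C_1,...,C_r, X_1^n, X_2^n satisfy: ω is independent of (X_1^n, X_2^n); for odd i, C_i — (ω, C_{[1:i-1]}, X_1^n) — X_2^n is a Markov chain; for even i, C_i — (ω, C_{[1:i-1]}, X_2^n) — X_1^n is a Markov chain; and (X_{1,q}, X_{2,q}) are i.i.d. across q. Then for all q ∈ [1:n] and all i ∈ [0:r], I(X_1^{1:q-1}; X_2^{q:n} | ω, C_{[1:i]}, X_1^{q:n}, X_2^{1:q-1}) = 0. -/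
open Finset

section PushfHelpers
variable {Ω : Type*} [Fintype Ω] (μ : Ω → ℝ)


lemma pushf_nonneg {α : Type*} [DecidableEq α] (hμ : ∀ ω, 0 ≤ μ ω) (X : Ω → α) (a : α) :
    0 ≤ pushf μ X a := Finset.sum_nonneg fun ω _ => hμ ω

lemma sum_pushf {α : Type*} [Fintype α] [DecidableEq α] (X : Ω → α) :
    ∑ a, pushf μ X a = ∑ ω, μ ω := Finset.sum_fiberwise _ _ _

lemma pushf_congr {α β : Type*} [DecidableEq α] [DecidableEq β]
    {X : Ω → α} {Y : Ω → β} {a : α} {b : β} (h : ∀ ω, X ω = a ↔ Y ω = b) :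
    pushf μ X a = pushf μ Y b := by
  unfold pushf; congr 1; ext ω; simp [h ω]
lemma pushf_marg {α β : Type*} [Fintype β] [DecidableEq α] [DecidableEq β]
    (X : Ω → α) (Y : Ω → β) (a : α) :
    pushf μ X a = ∑ b, pushf μ (fun ω => (X ω, Y ω)) (a, b) := by
  unfold pushf
  simp only [Finset.sum_filter]
  rw [Finset.sum_comm]
  refine Finset.sum_congr rfl fun ω _ => ?_
  by_cases h : X ω = a <;> simp [h, Prod.ext_iff]
lemma pushf_marg_fst {α β : Type*} [Fintype α] [DecidableEq α] [DecidableEq β]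
    (X : Ω → α) (Y : Ω → β) (b : β) :
    pushf μ Y b = ∑ a, pushf μ (fun ω => (X ω, Y ω)) (a, b) := by
  unfold pushf
  simp only [Finset.sum_filter]
  rw [Finset.sum_comm]
  refine Finset.sum_congr rfl fun ω _ => ?_
  by_cases h : Y ω = b <;> simp [h, Prod.ext_iff]

section Triple
set_option linter.unusedSectionVars false
variable {α β γ : Type*} [Fintype α] [Fintype β] [Fintype γ]
    [DecidableEq α] [DecidableEq β] [DecidableEq γ]
    (A : Ω → α) (B : Ω → β) (Cc : Ω → γ)

lemma marg_AB (a : α) (b : β) :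
    pushf μ (fun ω => (A ω, B ω)) (a, b)
      = ∑ c, pushf μ (fun ω => (A ω, B ω, Cc ω)) (a, b, c) := by
  rw [pushf_marg μ (fun ω => (A ω, B ω)) Cc (a, b)]
  refine Finset.sum_congr rfl fun c _ => ?_
  exact pushf_congr μ (fun ω => by simp [Prod.ext_iff, and_assoc])

lemma marg_BC (b : β) (c : γ) :
    pushf μ (fun ω => (B ω, Cc ω)) (b, c)
      = ∑ a, pushf μ (fun ω => (A ω, B ω, Cc ω)) (a, b, c) :=
  pushf_marg_fst μ A (fun ω => (B ω, Cc ω)) (b, c)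

lemma marg_B (b : β) :
    pushf μ B b = ∑ a, ∑ c, pushf μ (fun ω => (A ω, B ω, Cc ω)) (a, b, c) := by
  rw [pushf_marg_fst μ A B b]
  exact Finset.sum_congr rfl fun a _ => by
    rw [pushf_marg μ (fun ω => (A ω, B ω)) Cc (a, b)]
    exact Finset.sum_congr rfl fun c _ =>
      pushf_congr μ (fun ω => by simp [Prod.ext_iff, and_assoc])

lemma condMI_of_factor (F : α × β → ℝ) (H : β × γ → ℝ)
    (hF : ∀ x, 0 ≤ F x) (hH : ∀ x, 0 ≤ H x)
    (hfac : ∀ a b c, pushf μ (fun ω => (A ω, B ω, Cc ω)) (a, b, c) = F (a, b) * H (b, c)) :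
    condMI μ A B Cc = 0 := by
  set P := pushf μ (fun ω => (A ω, B ω, Cc ω)) with hPdef
  set pAB := pushf μ (fun ω => (A ω, B ω)) with hABdef
  set pBC := pushf μ (fun ω => (B ω, Cc ω)) with hBCdef
  set pB := pushf μ B with hBdef
  have hM1 : ∀ a b, pAB (a, b) = F (a, b) * ∑ c, H (b, c) := by
    intro a b; rw [hABdef, marg_AB μ A B Cc a b]
    simp only [← hPdef, hfac]; exact (Finset.mul_sum _ _ _).symm
  have hM2 : ∀ b c, pBC (b, c) = (∑ a, F (a, b)) * H (b, c) := by
    intro b c; rw [hBCdef, marg_BC μ A B Cc b c]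
    simp only [← hPdef, hfac]; exact (Finset.sum_mul _ _ _).symm
  have hMB : ∀ b, pB b = (∑ a, F (a, b)) * ∑ c, H (b, c) := by
    intro b; rw [hBdef, marg_B μ A B Cc b]
    simp only [← hPdef, hfac]
    rw [Finset.sum_mul]
    exact Finset.sum_congr rfl fun a _ => (Finset.mul_sum _ _ _).symm
  have key : ∀ a b c, P (a, b, c) * Real.log (P (a, b, c))
      = P (a, b, c) * Real.log (pAB (a, b))
        + P (a, b, c) * Real.log (pBC (b, c))
        - P (a, b, c) * Real.log (pB b) := by
    intro a b c
    by_cases hz : P (a, b, c) = 0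
    · simp [hz]
    · have hFH : F (a, b) * H (b, c) ≠ 0 := by rw [← hfac a b c]; exact hz
      have hFpos : 0 < F (a, b) :=
        lt_of_le_of_ne (hF _) (Ne.symm (left_ne_zero_of_mul hFH))
      have hHpos : 0 < H (b, c) :=
        lt_of_le_of_ne (hH _) (Ne.symm (right_ne_zero_of_mul hFH))
      have hSH : 0 < ∑ c', H (b, c') :=
        lt_of_lt_of_le hHpos (Finset.single_le_sum (f := fun c' => H (b, c')) (fun i _ => hH _) (Finset.mem_univ c))
      have hSF : 0 < ∑ a', F (a', b) :=
        lt_of_lt_of_le hFpos (Finset.single_le_sum (f := fun a' => F (a', b)) (fun i _ => hF _) (Finset.mem_univ a))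
      rw [hM1, hM2, hMB, hfac a b c,
        Real.log_mul hFpos.ne' hHpos.ne', Real.log_mul hFpos.ne' hSH.ne',
        Real.log_mul hSF.ne' hHpos.ne', Real.log_mul hSF.ne' hSH.ne']
      ring
  unfold condMI Hent ent
  rw [← hPdef, ← hABdef, ← hBCdef, ← hBdef]
  simp only [Fintype.sum_prod_type]
  have e3 : ∑ a, ∑ b, ∑ c, P (a, b, c) * Real.log (P (a, b, c))
      = (∑ a, ∑ b, ∑ c, P (a, b, c) * Real.log (pAB (a, b)))
        + (∑ a, ∑ b, ∑ c, P (a, b, c) * Real.log (pBC (b, c)))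
        - (∑ a, ∑ b, ∑ c, P (a, b, c) * Real.log (pB b)) := by
    rw [show (∑ a, ∑ b, ∑ c, P (a, b, c) * Real.log (P (a, b, c)))
        = ∑ a, ∑ b, ∑ c, (P (a, b, c) * Real.log (pAB (a, b))
          + P (a, b, c) * Real.log (pBC (b, c))
          - P (a, b, c) * Real.log (pB b)) from
      Finset.sum_congr rfl fun a _ => Finset.sum_congr rfl fun b _ =>
        Finset.sum_congr rfl fun c _ => key a b c]
    simp only [Finset.sum_sub_distrib, Finset.sum_add_distrib]
  have eA : ∑ a, ∑ b, ∑ c, P (a, b, c) * Real.log (pAB (a, b))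
      = ∑ a, ∑ b, pAB (a, b) * Real.log (pAB (a, b)) := by
    refine Finset.sum_congr rfl fun a _ => Finset.sum_congr rfl fun b _ => ?_
    rw [← Finset.sum_mul, ← marg_AB μ A B Cc a b]
  have eB2 : ∑ a, ∑ b, ∑ c, P (a, b, c) * Real.log (pBC (b, c))
      = ∑ b, ∑ c, pBC (b, c) * Real.log (pBC (b, c)) := by
    rw [Finset.sum_comm]
    refine Finset.sum_congr rfl fun b _ => ?_
    rw [Finset.sum_comm]
    refine Finset.sum_congr rfl fun c _ => ?_
    rw [← Finset.sum_mul, ← marg_BC μ A B Cc b c]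
  have eB0 : ∑ a, ∑ b, ∑ c, P (a, b, c) * Real.log (pB b)
      = ∑ b, pB b * Real.log (pB b) := by
    rw [Finset.sum_comm]
    refine Finset.sum_congr rfl fun b _ => ?_
    simp only [← Finset.sum_mul]
    rw [← marg_B μ A B Cc b]
  rw [e3, eA, eB2, eB0]; ring

lemma factor_of_condMI (hμ0 : ∀ ω, 0 ≤ μ ω) (hμ1 : ∑ ω, μ ω = 1)
    (h : condMI μ A B Cc = 0) (a : α) (b : β) (c : γ) :
    pushf μ (fun ω => (A ω, B ω, Cc ω)) (a, b, c) * pushf μ B b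
      = pushf μ (fun ω => (A ω, B ω)) (a, b) * pushf μ (fun ω => (B ω, Cc ω)) (b, c) := by
  set P := pushf μ (fun ω => (A ω, B ω, Cc ω)) with hPdef
  set pAB := pushf μ (fun ω => (A ω, B ω)) with hABdef
  set pBC := pushf μ (fun ω => (B ω, Cc ω)) with hBCdef
  set pB := pushf μ B with hBdef
  have hP0 : ∀ z, 0 ≤ P z := fun z => pushf_nonneg μ hμ0 _ z
  have hAB0 : ∀ x, 0 ≤ pAB x := fun x => pushf_nonneg μ hμ0 _ x
  have hBC0 : ∀ x, 0 ≤ pBC x := fun x => pushf_nonneg μ hμ0 _ x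
  have hB0 : ∀ x, 0 ≤ pB x := fun x => pushf_nonneg μ hμ0 _ x
  have mAB : ∀ a' b', pAB (a', b') = ∑ c', P (a', b', c') := fun a' b' => marg_AB μ A B Cc a' b'
  have mBC : ∀ b' c', pBC (b', c') = ∑ a', P (a', b', c') := fun b' c' => marg_BC μ A B Cc b' c'
  have mBc : ∀ b', pB b' = ∑ c', pBC (b', c') := fun b' => by
    rw [hBdef, hBCdef]; exact pushf_marg μ B Cc b'
  have mBa : ∀ b', pB b' = ∑ a', pAB (a', b') := fun b' => by
    rw [hBdef, hABdef]; exact pushf_marg_fst μ A B b'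
  -- positivity bundle
  have hposb : ∀ a' b' c', P (a', b', c') ≠ 0 →
      0 < P (a', b', c') ∧ 0 < pAB (a', b') ∧ 0 < pBC (b', c') ∧ 0 < pB b' := by
    intro a' b' c' hz
    have hPpos : 0 < P (a', b', c') := lt_of_le_of_ne (hP0 _) (Ne.symm hz)
    have h1 : 0 < pAB (a', b') := by
      rw [mAB]
      exact lt_of_lt_of_le hPpos
        (Finset.single_le_sum (f := fun c'' => P (a', b', c'')) (fun i _ => hP0 _)
          (Finset.mem_univ c'))
    have h2 : 0 < pBC (b', c') := by
      rw [mBC]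
      exact lt_of_lt_of_le hPpos
        (Finset.single_le_sum (f := fun a'' => P (a'', b', c')) (fun i _ => hP0 _)
          (Finset.mem_univ a'))
    have h3 : 0 < pB b' := by
      rw [mBc]
      exact lt_of_lt_of_le h2
        (Finset.single_le_sum (f := fun c'' => pBC (b', c'')) (fun i _ => hBC0 _)
          (Finset.mem_univ c'))
    exact ⟨hPpos, h1, h2, h3⟩
  set K : α × β × γ → ℝ := fun z =>
    if pB z.2.1 = 0 then 0 else pAB (z.1, z.2.1) * pBC (z.2.1, z.2.2) / pB z.2.1 with hKdef
  set U : α × β × γ → ℝ := fun z =>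
    pAB (z.1, z.2.1) * pBC (z.2.1, z.2.2) / (P z * pB z.2.1) with hUdef
  set s : α × β × γ → ℝ := fun z =>
    P z * Real.log (P z) + P z * Real.log (pB z.2.1)
      - P z * Real.log (pAB (z.1, z.2.1)) - P z * Real.log (pBC (z.2.1, z.2.2))
      - P z + K z with hsdef
  have hs_eq : ∀ a' b' c', P (a', b', c') ≠ 0 →
      s (a', b', c') = P (a', b', c') * (U (a', b', c') - 1 - Real.log (U (a', b', c'))) := by
    intro a' b' c' hz
    obtain ⟨hPp, hABp, hBCp, hBp⟩ := hposb a' b' c' hz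
    have hUval : U (a', b', c') = pAB (a', b') * pBC (b', c') / (P (a', b', c') * pB b') := rfl
    have hKval : K (a', b', c') = pAB (a', b') * pBC (b', c') / pB b' := if_neg hBp.ne'
    have hlogU : Real.log (U (a', b', c'))
        = Real.log (pAB (a', b')) + Real.log (pBC (b', c'))
          - Real.log (P (a', b', c')) - Real.log (pB b') := by
      rw [hUval, Real.log_div (by positivity) (by positivity), Real.log_mul hABp.ne' hBCp.ne',
        Real.log_mul hPp.ne' hBp.ne']
      ring
    have hKU : K (a', b', c') = U (a', b', c') * P (a', b', c') := by
      rw [hKval, hUval]; field_simp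
    simp only [hsdef]
    rw [hKU, hlogU]
    ring
  have hUpos : ∀ a' b' c', P (a', b', c') ≠ 0 → 0 < U (a', b', c') := by
    intro a' b' c' hz
    obtain ⟨hPp, hABp, hBCp, hBp⟩ := hposb a' b' c' hz
    have : U (a', b', c') = pAB (a', b') * pBC (b', c') / (P (a', b', c') * pB b') := rfl
    rw [this]; positivity
  have hs0 : ∀ z, 0 ≤ s z := by
    rintro ⟨a', b', c'⟩
    by_cases hz : P (a', b', c') = 0
    · have hsK : s (a', b', c') = K (a', b', c') := by
        simp [hsdef, hz]
      rw [hsK, hKdef]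
      dsimp only
      split
      · exact le_rfl
      · exact div_nonneg (mul_nonneg (hAB0 _) (hBC0 _)) (hB0 _)
    · rw [hs_eq a' b' c' hz]
      have hu := hUpos a' b' c' hz
      have := Real.log_le_sub_one_of_pos hu
      have hPp := lt_of_le_of_ne (hP0 (a', b', c')) (Ne.symm hz)
      nlinarith
  have hKsum : ∑ z : α × β × γ, K z = 1 := by
    rw [Fintype.sum_prod_type]
    simp only [Fintype.sum_prod_type]
    rw [Finset.sum_comm]
    have : ∀ b', ∑ a', ∑ c', K (a', b', c') = pB b' := by
      intro b'
      by_cases hb : pB b' = 0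
      · have hABz : ∀ a', pAB (a', b') = 0 := by
          intro a'
          have h1 : pAB (a', b') ≤ pB b' := by
            rw [mBa]
            exact Finset.single_le_sum (f := fun a'' => pAB (a'', b')) (fun i _ => hAB0 _)
              (Finset.mem_univ a')
          exact le_antisymm (hb ▸ h1) (hAB0 _)
        simp only [hKdef, hb, if_pos]
        simp [hb]
      · have hterm : ∀ a', ∑ c', K (a', b', c') = pAB (a', b') := by
          intro a'
          simp only [hKdef, if_neg hb]
          rw [show (∑ c', pAB (a', b') * pBC (b', c') / pB b')
              = (pAB (a', b') / pB b') * ∑ c', pBC (b', c') from by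
            rw [Finset.mul_sum]; exact Finset.sum_congr rfl fun c' _ => by ring]
          rw [← mBc b', div_mul_cancel₀ _ hb]
        rw [Finset.sum_congr rfl fun a' _ => hterm a', ← mBa b']
    rw [Finset.sum_congr rfl fun b' _ => this b']
    rw [hBdef, sum_pushf, hμ1]
  have hPsum : ∑ z : α × β × γ, P z = 1 := by rw [hPdef, sum_pushf, hμ1]
  have hcondMI : condMI μ A B Cc
      = (∑ z : α × β × γ, P z * Real.log (P z))
        + (∑ z : α × β × γ, P z * Real.log (pB z.2.1))
        - (∑ z : α × β × γ, P z * Real.log (pAB (z.1, z.2.1)))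
        - (∑ z : α × β × γ, P z * Real.log (pBC (z.2.1, z.2.2))) := by
    unfold condMI Hent ent
    rw [← hPdef, ← hABdef, ← hBCdef, ← hBdef]
    simp only [Fintype.sum_prod_type]
    have eA : ∑ a', ∑ b', ∑ c', P (a', b', c') * Real.log (pAB (a', b'))
        = ∑ a', ∑ b', pAB (a', b') * Real.log (pAB (a', b')) := by
      refine Finset.sum_congr rfl fun a' _ => Finset.sum_congr rfl fun b' _ => ?_
      rw [← Finset.sum_mul, ← mAB a' b']
    have eB2 : ∑ a', ∑ b', ∑ c', P (a', b', c') * Real.log (pBC (b', c'))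
        = ∑ b', ∑ c', pBC (b', c') * Real.log (pBC (b', c')) := by
      rw [Finset.sum_comm]
      refine Finset.sum_congr rfl fun b' _ => ?_
      rw [Finset.sum_comm]
      refine Finset.sum_congr rfl fun c' _ => ?_
      rw [← Finset.sum_mul, ← mBC b' c']
    have eB0 : ∑ a', ∑ b', ∑ c', P (a', b', c') * Real.log (pB b')
        = ∑ b', pB b' * Real.log (pB b') := by
      rw [Finset.sum_comm]
      refine Finset.sum_congr rfl fun b' _ => ?_
      simp only [← Finset.sum_mul]
      have : ∑ a', ∑ c', P (a', b', c') = pB b' := by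
        rw [mBa b']; exact Finset.sum_congr rfl fun a' _ => (mAB a' b').symm
      rw [this]
    rw [eA, eB2, eB0]
    ring
  have hsum : ∑ z : α × β × γ, s z = 0 := by
    have e : ∑ z : α × β × γ, s z
        = (condMI μ A B Cc) - (∑ z : α × β × γ, P z) + (∑ z : α × β × γ, K z) := by
      rw [hcondMI]
      simp only [hsdef, Finset.sum_add_distrib, Finset.sum_sub_distrib]
      try ring
    rw [e, h, hPsum, hKsum]; ring
  have hzero : ∀ z, s z = 0 := fun z =>
    (Finset.sum_eq_zero_iff_of_nonneg (fun z _ => hs0 z)).mp hsum z (Finset.mem_univ z)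
  by_cases hz : P (a, b, c) = 0
  · by_cases hb : pB b = 0
    · have hABz : pAB (a, b) = 0 := by
        have h1 : pAB (a, b) ≤ pB b := by
          rw [mBa]
          exact Finset.single_le_sum (f := fun a'' => pAB (a'', b)) (fun i _ => hAB0 _)
            (Finset.mem_univ a)
        exact le_antisymm (hb ▸ h1) (hAB0 _)
      rw [hz, hABz]; ring
    · have hs' := hzero (a, b, c)
      simp only [hsdef, hKdef] at hs'
      simp only [hz, zero_mul, add_zero, sub_zero, zero_add, zero_sub, neg_zero, if_neg hb] at hs'
      have h2 : pAB (a, b) * pBC (b, c) = 0 := by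
        rcases div_eq_zero_iff.mp hs' with h' | h'
        · exact h'
        · exact absurd h' hb
      rw [hz, h2]; ring
  · have hs' := hzero (a, b, c)
    rw [hs_eq a b c hz] at hs'
    obtain ⟨hPp, hABp, hBCp, hBp⟩ := hposb a b c hz
    have hu := hUpos a b c hz
    have hfac0 : U (a, b, c) - 1 - Real.log (U (a, b, c)) = 0 :=
      (mul_eq_zero.mp hs').resolve_left hz
    have hU1 : U (a, b, c) = 1 := by
      by_contra hne
      have := Real.log_lt_sub_one_of_pos hu hne
      linarith
    have hUval : U (a, b, c) = pAB (a, b) * pBC (b, c) / (P (a, b, c) * pB b) := rfl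
    rw [hUval] at hU1
    have := (div_eq_one_iff_eq (by positivity)).mp hU1
    linarith

end Triple

end PushfHelpers

/-- Glue together the two halves of a sequence split at `q`. -/
noncomputable def glue {n : ℕ} (q : Fin n) {𝒳 : Type*}
    (a : {j : Fin n // j < q} → 𝒳) (u : {j : Fin n // q ≤ j} → 𝒳) : Fin n → 𝒳 :=
  fun j => if h : j < q then a ⟨j, h⟩ else u ⟨j, le_of_not_gt h⟩

lemma glue_iff {n : ℕ} (q : Fin n) {𝒳 : Type*} (x : Fin n → 𝒳)
    (a : {j : Fin n // j < q} → 𝒳) (u : {j : Fin n // q ≤ j} → 𝒳) :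
    ((∀ j : {j : Fin n // j < q}, x j = a j) ∧ (∀ j : {j : Fin n // q ≤ j}, x j = u j))
      ↔ x = glue q a u := by
  constructor
  · rintro ⟨h1, h2⟩
    funext j
    unfold glue
    by_cases hj : j < q
    · rw [dif_pos hj]; exact h1 ⟨j, hj⟩
    · rw [dif_neg hj]; exact h2 ⟨j, le_of_not_gt hj⟩
  · rintro rfl
    refine ⟨fun j => ?_, fun j => ?_⟩
    · unfold glue; rw [dif_pos j.2]
    · unfold glue; rw [dif_neg (not_lt.mpr j.2)]

lemma glue_lt {n : ℕ} (q : Fin n) {𝒳 : Type*}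
    (a : {j : Fin n // j < q} → 𝒳) (u : {j : Fin n // q ≤ j} → 𝒳)
    (j : {j : Fin n // j < q}) : glue q a u j = a j := by
  unfold glue; rw [dif_pos j.2]

lemma glue_ge {n : ℕ} (q : Fin n) {𝒳 : Type*}
    (a : {j : Fin n // j < q} → 𝒳) (u : {j : Fin n // q ≤ j} → 𝒳)
    (j : {j : Fin n // q ≤ j}) : glue q a u j = u j := by
  unfold glue; rw [dif_neg (not_lt.mpr j.2)]

lemma prod_split {n : ℕ} {𝒳₁ 𝒳₂ : Type*} (q : Fin n) (p : 𝒳₁ × 𝒳₂ → ℝ)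
    (x1 : Fin n → 𝒳₁) (x2 : Fin n → 𝒳₂) :
    ∏ j, p (x1 j, x2 j)
      = (∏ j : {j : Fin n // j < q}, p (x1 j, x2 j))
        * ∏ j : {j : Fin n // q ≤ j}, p (x1 j, x2 j) := by
  rw [← Finset.prod_filter_mul_prod_filter_not Finset.univ (fun j => j < q)]
  congr 1
  · exact Finset.prod_subtype (Finset.univ.filter (fun j => j < q)) (by simp) _
  · refine Finset.prod_subtype (Finset.univ.filter (fun j => ¬ j < q)) (by simp [not_lt]) _

set_option maxHeartbeats 2000000 in
set_option synthInstance.maxSize 512 in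
set_option synthInstance.maxHeartbeats 400000 in
/-- Lemma on interactive Markov structure: suppose `G` (the common
randomness `ω`), `C_1,...,C_r`, and the i.i.d. source sequences `X_1^n, X_2^n` satisfy:
`G` is independent of `(X_1^n, X_2^n)`, which is i.i.d. `∼ p`; for paper-odd rounds
(0-indexed: `Even i.val`), `C_i — (G, C_{<i}, X_1^n) — X_2^n` is a Markov chain; for
paper-even rounds (`Odd i.val`), `C_i — (G, C_{<i}, X_2^n) — X_1^n`. Then for all
`q ∈ [1:n]` and all `i ∈ [0:r]`,
`I(X_1^{1:q-1}; X_2^{q:n} | G, C_{[1:i]}, X_1^{q:n}, X_2^{1:q-1}) = 0`. -/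
theorem markov_lemma_interactive {Ω 𝒜 𝒞 𝒳₁ 𝒳₂ : Type*} {n r : ℕ}
    [Fintype Ω] [Fintype 𝒜] [Fintype 𝒞] [Fintype 𝒳₁] [Fintype 𝒳₂]
    [DecidableEq 𝒜] [DecidableEq 𝒞] [DecidableEq 𝒳₁] [DecidableEq 𝒳₂]
    (μ : Ω → ℝ) (hμ : IsPMF μ)
    (G : Ω → 𝒜) (C : Fin r → Ω → 𝒞)
    (X1 : Ω → Fin n → 𝒳₁) (X2 : Ω → Fin n → 𝒳₂)
    (p : 𝒳₁ × 𝒳₂ → ℝ) (hp : IsPMF p)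
    (hiid : pushf μ (fun ω => (G ω, fun q => (X1 ω q, X2 ω q)))
      = fun z => pushf μ G z.1 * ∏ q, p (z.2 q))
    (hodd : ∀ i : Fin r, Even i.val →
      condMI μ (C i)
        (fun ω => (G ω, (fun j : Fin i.val => C (Fin.castLE i.isLt.le j) ω), X1 ω))
        X2 = 0)
    (heven : ∀ i : Fin r, Odd i.val →
      condMI μ (C i)
        (fun ω => (G ω, (fun j : Fin i.val => C (Fin.castLE i.isLt.le j) ω), X2 ω))
        X1 = 0) :
    ∀ (q : Fin n) (i : ℕ) (hi : i ≤ r),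
      condMI μ
        (fun ω => fun j : {j : Fin n // j < q} => X1 ω j.1)
        (fun ω => ((G ω, (fun j : Fin i => C (Fin.castLE hi j) ω)),
          ((fun j : {j : Fin n // q ≤ j} => X1 ω j.1),
           (fun j : {j : Fin n // j < q} => X2 ω j.1))))
        (fun ω => fun j : {j : Fin n // q ≤ j} => X2 ω j.1) = 0 := by
  obtain ⟨hμ0, hμ1⟩ := hμ
  have INV : ∀ i, ∀ hi : i ≤ r,
      ∃ f : 𝒜 × (Fin i → 𝒞) × (Fin n → 𝒳₁) → ℝ,
      ∃ h : 𝒜 × (Fin i → 𝒞) × (Fin n → 𝒳₂) → ℝ,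
      (∀ x, 0 ≤ f x) ∧ (∀ x, 0 ≤ h x) ∧
      ∀ g cv x1 x2,
        pushf μ (fun ω => (G ω, (fun j : Fin i => C (Fin.castLE hi j) ω), X1 ω, X2 ω))
            (g, cv, x1, x2)
          = (∏ q', p (x1 q', x2 q')) * f (g, cv, x1) * h (g, cv, x2) := by
    intro i
    induction i with
    | zero =>
      intro hi
      refine ⟨fun x => pushf μ G x.1, fun _ => 1,
        fun x => pushf_nonneg μ hμ0 _ _, fun _ => zero_le_one, ?_⟩
      intro g cv x1 x2
      have e : pushf μ (fun ω => (G ω, (fun j : Fin 0 => C (Fin.castLE hi j) ω), X1 ω, X2 ω))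
            (g, cv, x1, x2)
          = pushf μ (fun ω => (G ω, fun q' => (X1 ω q', X2 ω q')))
            (g, fun q' => (x1 q', x2 q')) := by
        refine pushf_congr μ fun ω => ?_
        simp only [Prod.ext_iff, funext_iff, Prod.mk.injEq]
        constructor
        · rintro ⟨h1, _, h3, h4⟩; exact ⟨h1, fun q' => ⟨h3 q', h4 q'⟩⟩
        · rintro ⟨h1, h2⟩
          exact ⟨h1, fun j => j.elim0, fun q' => (h2 q').1, fun q' => (h2 q').2⟩
      rw [e, hiid]
      dsimp only
      ring
    | succ i ih =>
      intro hi1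
      have hi : i ≤ r := Nat.le_of_succ_le hi1
      have hilt : i < r := hi1
      obtain ⟨f, h, hf0, hh0, hfac⟩ := ih hi
      rcases Nat.even_or_odd i with hpar | hpar
      · -- paper-odd round: C_i determined by (G, C_{<i}, X1)
        have hMark : condMI μ (C ⟨i, hilt⟩)
            (fun ω => (G ω, (fun j : Fin i => C (Fin.castLE hi j) ω), X1 ω)) X2 = 0 :=
          hodd ⟨i, hilt⟩ hpar
        refine ⟨fun x =>
            if pushf μ (fun ω => (G ω, (fun j : Fin i => C (Fin.castLE hi j) ω), X1 ω))
                (x.1, fun j => x.2.1 j.castSucc, x.2.2) = 0 then 0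
            else pushf μ (fun ω => (C ⟨i, hilt⟩ ω,
                  (G ω, (fun j : Fin i => C (Fin.castLE hi j) ω), X1 ω)))
                (x.2.1 (Fin.last i), (x.1, fun j => x.2.1 j.castSucc, x.2.2))
              * f (x.1, fun j => x.2.1 j.castSucc, x.2.2)
              / pushf μ (fun ω => (G ω, (fun j : Fin i => C (Fin.castLE hi j) ω), X1 ω))
                (x.1, fun j => x.2.1 j.castSucc, x.2.2),
          fun x => h (x.1, fun j => x.2.1 j.castSucc, x.2.2), ?_, ?_, ?_⟩
        · intro x; dsimp only; split
          · exact le_rfl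
          · exact div_nonneg (mul_nonneg (pushf_nonneg μ hμ0 _ _) (hf0 _))
              (pushf_nonneg μ hμ0 _ _)
        · intro x; exact hh0 _
        · intro g cv x1 x2
          dsimp only
          have e1 : pushf μ (fun ω => (G ω, (fun j : Fin (i+1) => C (Fin.castLE hi1 j) ω),
                X1 ω, X2 ω)) (g, cv, x1, x2)
              = pushf μ (fun ω => (C ⟨i, hilt⟩ ω,
                  (G ω, (fun j : Fin i => C (Fin.castLE hi j) ω), X1 ω), X2 ω))
                (cv (Fin.last i), (g, fun j => cv j.castSucc, x1), x2) := by
            refine pushf_congr μ fun ω => ?_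
            simp only [Prod.ext_iff, funext_iff, Prod.mk.injEq]
            constructor
            · rintro ⟨h1, h2, h3, h4⟩
              exact ⟨h2 (Fin.last i), ⟨h1, fun j => h2 j.castSucc, h3⟩, h4⟩
            · rintro ⟨h0, ⟨h1, h2, h3⟩, h4⟩
              refine ⟨h1, fun j => ?_, h3, h4⟩
              induction j using Fin.lastCases with
              | last => exact h0
              | cast j => exact h2 j
          have e2 : ∀ (g' : 𝒜) (cvf : Fin i → 𝒞) (x1' : Fin n → 𝒳₁) (x2v : Fin n → 𝒳₂),
              pushf μ (fun ω => ((G ω, (fun j : Fin i => C (Fin.castLE hi j) ω), X1 ω), X2 ω))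
                  ((g', cvf, x1'), x2v)
                = (∏ q', p (x1' q', x2v q')) * f (g', cvf, x1') * h (g', cvf, x2v) := by
            intro g' cvf x1' x2v
            rw [show pushf μ
                (fun ω => ((G ω, (fun j : Fin i => C (Fin.castLE hi j) ω), X1 ω), X2 ω))
                  ((g', cvf, x1'), x2v)
                = pushf μ (fun ω => (G ω, (fun j : Fin i => C (Fin.castLE hi j) ω),
                    X1 ω, X2 ω)) (g', cvf, x1', x2v) from
              pushf_congr μ fun ω => by
                simp only [Prod.ext_iff, Prod.mk.injEq]; tauto]
            exact hfac g' cvf x1' x2v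
          have hMsum : pushf μ (fun ω => (G ω, (fun j : Fin i => C (Fin.castLE hi j) ω), X1 ω))
                (g, fun j => cv j.castSucc, x1)
              = ∑ x2v, pushf μ
                  (fun ω => ((G ω, (fun j : Fin i => C (Fin.castLE hi j) ω), X1 ω), X2 ω))
                  ((g, fun j => cv j.castSucc, x1), x2v) :=
            pushf_marg μ _ X2 _
          by_cases hMz : pushf μ (fun ω => (G ω, (fun j : Fin i => C (Fin.castLE hi j) ω), X1 ω))
              (g, fun j => cv j.castSucc, x1) = 0
          · rw [if_pos hMz]
            have hz2 : pushf μ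
                (fun ω => ((G ω, (fun j : Fin i => C (Fin.castLE hi j) ω), X1 ω), X2 ω))
                ((g, fun j => cv j.castSucc, x1), x2) = 0 := by
              rw [hMz] at hMsum
              exact (Finset.sum_eq_zero_iff_of_nonneg
                (fun x _ => pushf_nonneg μ hμ0 _ _)).mp hMsum.symm x2 (Finset.mem_univ x2)
            have hle : pushf μ (fun ω => (C ⟨i, hilt⟩ ω,
                  (G ω, (fun j : Fin i => C (Fin.castLE hi j) ω), X1 ω), X2 ω))
                (cv (Fin.last i), (g, fun j => cv j.castSucc, x1), x2)
                ≤ pushf μ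
                  (fun ω => ((G ω, (fun j : Fin i => C (Fin.castLE hi j) ω), X1 ω), X2 ω))
                  ((g, fun j => cv j.castSucc, x1), x2) := by
              rw [marg_BC μ (C ⟨i, hilt⟩)
                (fun ω => (G ω, (fun j : Fin i => C (Fin.castLE hi j) ω), X1 ω)) X2]
              exact Finset.single_le_sum
                (f := fun c' => pushf μ (fun ω => (C ⟨i, hilt⟩ ω,
                  (G ω, (fun j : Fin i => C (Fin.castLE hi j) ω), X1 ω), X2 ω))
                  (c', (g, fun j => cv j.castSucc, x1), x2))
                (fun _ _ => pushf_nonneg μ hμ0 _ _) (Finset.mem_univ _)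
            rw [e1, le_antisymm (hz2 ▸ hle) (pushf_nonneg μ hμ0 _ _)]
            ring
          · rw [if_neg hMz, e1]
            have heq := factor_of_condMI μ (C ⟨i, hilt⟩)
              (fun ω => (G ω, (fun j : Fin i => C (Fin.castLE hi j) ω), X1 ω)) X2
              hμ0 hμ1 hMark (cv (Fin.last i)) (g, fun j => cv j.castSucc, x1) x2
            rw [e2 g (fun j => cv j.castSucc) x1 x2] at heq
            field_simp
            linear_combination heq
      · -- paper-even round: C_i determined by (G, C_{<i}, X2)
        have hMark : condMI μ (C ⟨i, hilt⟩)
            (fun ω => (G ω, (fun j : Fin i => C (Fin.castLE hi j) ω), X2 ω)) X1 = 0 :=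
          heven ⟨i, hilt⟩ hpar
        refine ⟨fun x => f (x.1, fun j => x.2.1 j.castSucc, x.2.2),
          fun x =>
            if pushf μ (fun ω => (G ω, (fun j : Fin i => C (Fin.castLE hi j) ω), X2 ω))
                (x.1, fun j => x.2.1 j.castSucc, x.2.2) = 0 then 0
            else pushf μ (fun ω => (C ⟨i, hilt⟩ ω,
                  (G ω, (fun j : Fin i => C (Fin.castLE hi j) ω), X2 ω)))
                (x.2.1 (Fin.last i), (x.1, fun j => x.2.1 j.castSucc, x.2.2))
              * h (x.1, fun j => x.2.1 j.castSucc, x.2.2)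
              / pushf μ (fun ω => (G ω, (fun j : Fin i => C (Fin.castLE hi j) ω), X2 ω))
                (x.1, fun j => x.2.1 j.castSucc, x.2.2), ?_, ?_, ?_⟩
        · intro x; exact hf0 _
        · intro x; dsimp only; split
          · exact le_rfl
          · exact div_nonneg (mul_nonneg (pushf_nonneg μ hμ0 _ _) (hh0 _))
              (pushf_nonneg μ hμ0 _ _)
        · intro g cv x1 x2
          dsimp only
          have e1 : pushf μ (fun ω => (G ω, (fun j : Fin (i+1) => C (Fin.castLE hi1 j) ω),
                X1 ω, X2 ω)) (g, cv, x1, x2)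
              = pushf μ (fun ω => (C ⟨i, hilt⟩ ω,
                  (G ω, (fun j : Fin i => C (Fin.castLE hi j) ω), X2 ω), X1 ω))
                (cv (Fin.last i), (g, fun j => cv j.castSucc, x2), x1) := by
            refine pushf_congr μ fun ω => ?_
            simp only [Prod.ext_iff, funext_iff, Prod.mk.injEq]
            constructor
            · rintro ⟨h1, h2, h3, h4⟩
              exact ⟨h2 (Fin.last i), ⟨h1, fun j => h2 j.castSucc, h4⟩, h3⟩
            · rintro ⟨h0, ⟨h1, h2, h4⟩, h3⟩
              refine ⟨h1, fun j => ?_, h3, h4⟩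
              induction j using Fin.lastCases with
              | last => exact h0
              | cast j => exact h2 j
          have e2 : ∀ (g' : 𝒜) (cvf : Fin i → 𝒞) (x2v : Fin n → 𝒳₂) (x1' : Fin n → 𝒳₁),
              pushf μ (fun ω => ((G ω, (fun j : Fin i => C (Fin.castLE hi j) ω), X2 ω), X1 ω))
                  ((g', cvf, x2v), x1')
                = (∏ q', p (x1' q', x2v q')) * f (g', cvf, x1') * h (g', cvf, x2v) := by
            intro g' cvf x2v x1'
            rw [show pushf μ
                (fun ω => ((G ω, (fun j : Fin i => C (Fin.castLE hi j) ω), X2 ω), X1 ω))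
                  ((g', cvf, x2v), x1')
                = pushf μ (fun ω => (G ω, (fun j : Fin i => C (Fin.castLE hi j) ω),
                    X1 ω, X2 ω)) (g', cvf, x1', x2v) from
              pushf_congr μ fun ω => by
                simp only [Prod.ext_iff, Prod.mk.injEq]; tauto]
            exact hfac g' cvf x1' x2v
          have hMsum : pushf μ (fun ω => (G ω, (fun j : Fin i => C (Fin.castLE hi j) ω), X2 ω))
                (g, fun j => cv j.castSucc, x2)
              = ∑ x1v, pushf μ
                  (fun ω => ((G ω, (fun j : Fin i => C (Fin.castLE hi j) ω), X2 ω), X1 ω))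
                  ((g, fun j => cv j.castSucc, x2), x1v) :=
            pushf_marg μ _ X1 _
          by_cases hMz : pushf μ (fun ω => (G ω, (fun j : Fin i => C (Fin.castLE hi j) ω), X2 ω))
              (g, fun j => cv j.castSucc, x2) = 0
          · rw [if_pos hMz]
            have hz2 : pushf μ
                (fun ω => ((G ω, (fun j : Fin i => C (Fin.castLE hi j) ω), X2 ω), X1 ω))
                ((g, fun j => cv j.castSucc, x2), x1) = 0 := by
              rw [hMz] at hMsum
              exact (Finset.sum_eq_zero_iff_of_nonneg
                (fun x _ => pushf_nonneg μ hμ0 _ _)).mp hMsum.symm x1 (Finset.mem_univ x1)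
            have hle : pushf μ (fun ω => (C ⟨i, hilt⟩ ω,
                  (G ω, (fun j : Fin i => C (Fin.castLE hi j) ω), X2 ω), X1 ω))
                (cv (Fin.last i), (g, fun j => cv j.castSucc, x2), x1)
                ≤ pushf μ
                  (fun ω => ((G ω, (fun j : Fin i => C (Fin.castLE hi j) ω), X2 ω), X1 ω))
                  ((g, fun j => cv j.castSucc, x2), x1) := by
              rw [marg_BC μ (C ⟨i, hilt⟩)
                (fun ω => (G ω, (fun j : Fin i => C (Fin.castLE hi j) ω), X2 ω)) X1]
              exact Finset.single_le_sum
                (f := fun c' => pushf μ (fun ω => (C ⟨i, hilt⟩ ω,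
                  (G ω, (fun j : Fin i => C (Fin.castLE hi j) ω), X2 ω), X1 ω))
                  (c', (g, fun j => cv j.castSucc, x2), x1))
                (fun _ _ => pushf_nonneg μ hμ0 _ _) (Finset.mem_univ _)
            rw [e1, le_antisymm (hz2 ▸ hle) (pushf_nonneg μ hμ0 _ _)]
            ring
          · rw [if_neg hMz, e1]
            have heq := factor_of_condMI μ (C ⟨i, hilt⟩)
              (fun ω => (G ω, (fun j : Fin i => C (Fin.castLE hi j) ω), X2 ω)) X1
              hμ0 hμ1 hMark (cv (Fin.last i)) (g, fun j => cv j.castSucc, x2) x1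
            rw [e2 g (fun j => cv j.castSucc) x2 x1] at heq
            field_simp
            linear_combination heq
  intro q i hi
  obtain ⟨f, h, hf0, hh0, hfac⟩ := INV i hi
  refine condMI_of_factor μ _ _ _
    (fun x => (∏ j : {j : Fin n // j < q}, p (x.1 j, x.2.2.2 j))
      * f (x.2.1.1, x.2.1.2, glue q x.1 x.2.2.1))
    (fun x => (∏ j : {j : Fin n // q ≤ j}, p (x.1.2.1 j, x.2 j))
      * h (x.1.1.1, x.1.1.2, glue q x.1.2.2 x.2))
    (fun x => mul_nonneg (Finset.prod_nonneg fun j _ => hp.1 _) (hf0 _))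
    (fun x => mul_nonneg (Finset.prod_nonneg fun j _ => hp.1 _) (hh0 _))
    ?_
  rintro a ⟨⟨g, cv⟩, u, v⟩ w
  have e : pushf μ (fun ω => ((fun j : {j : Fin n // j < q} => X1 ω j.1),
        ((G ω, (fun j : Fin i => C (Fin.castLE hi j) ω)),
          ((fun j : {j : Fin n // q ≤ j} => X1 ω j.1),
           (fun j : {j : Fin n // j < q} => X2 ω j.1))),
        (fun j : {j : Fin n // q ≤ j} => X2 ω j.1))) (a, ((g, cv), u, v), w)
      = pushf μ (fun ω => (G ω, (fun j : Fin i => C (Fin.castLE hi j) ω), X1 ω, X2 ω))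
        (g, cv, glue q a u, glue q v w) := by
    refine pushf_congr μ fun ω => ?_
    simp only [Prod.ext_iff, Prod.mk.injEq]
    rw [← glue_iff q (X1 ω) a u, ← glue_iff q (X2 ω) v w]
    simp only [funext_iff]
    tauto
  rw [e, hfac g cv (glue q a u) (glue q v w), prod_split q p (glue q a u) (glue q v w)]
  rw [show (∏ j : {j : Fin n // j < q}, p (glue q a u j.1, glue q v w j.1))
      = ∏ j : {j : Fin n // j < q}, p (a j, v j) from
    Finset.prod_congr rfl fun j _ => by rw [glue_lt q a u j, glue_lt q v w j]]
  rw [show (∏ j : {j : Fin n // q ≤ j}, p (glue q a u j.1, glue q v w j.1))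
      = ∏ j : {j : Fin n // q ≤ j}, p (u j, w j) from
    Finset.prod_congr rfl fun j _ => by rw [glue_ge q a u j, glue_ge q v w j]]
  ring
end
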